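/- Let q ≥ 1 be an integer, β > 0, ε > 0, and let a ≤ b be real numbers. Let f : [a,b] → ℝ be q-times continuously differentiable on [a,b] and suppose |f^{(q)}(t)| ≥ β for all t ∈ [a,b]. Then the Lebesgue measure of the set {t ∈ [a,b] : |f(t)| ≤ ε} is at most 4 · (q! · ε / (2β))^{1/q}. -/

import Mathlib

open Real MeasureTheory Polynomial Finset Polynomial.Chebyshev

private lemma coeff_lagrange_basis {n : ℕ} (v : Fin (n+1) → ℝ) (hv : Function.Injective v)
    (i : Fin (n+1)) :
    (Lagrange.basis Finset.univ v i).coeff n = (∏ j ∈ Finset.univ.erase i, (v i - v j))⁻¹ := by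
  have hinj : Set.InjOn v (Finset.univ : Finset (Fin (n+1))) := hv.injOn
  have hdeg : (Lagrange.basis Finset.univ v i).natDegree = n := by
    have := Lagrange.natDegree_basis hinj (Finset.mem_univ i)
    simpa using this
  have hcoeff : (Lagrange.basis Finset.univ v i).coeff n
      = (Lagrange.basis Finset.univ v i).leadingCoeff := by
    rw [Polynomial.leadingCoeff, hdeg]
  rw [hcoeff]
  unfold Lagrange.basis
  rw [Polynomial.leadingCoeff_prod]
  rw [← Finset.prod_inv_distrib]
  refine Finset.prod_congr rfl ?_
  intro j hj
  have hij : v i ≠ v j := fun h => (Finset.mem_erase.mp hj).1.symm (hv h)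
  unfold Lagrange.basisDivisor
  rw [Polynomial.leadingCoeff_mul, Polynomial.leadingCoeff_C,
    (Polynomial.monic_X_sub_C (v j)).leadingCoeff, mul_one]

private lemma coeff_interpolate {n : ℕ} (v : Fin (n+1) → ℝ) (hv : Function.Injective v)
    (r : Fin (n+1) → ℝ) :
    (Lagrange.interpolate Finset.univ v r).coeff n
      = ∑ i, r i * (∏ j ∈ Finset.univ.erase i, (v i - v j))⁻¹ := by
  rw [Lagrange.interpolate_apply, Polynomial.finset_sum_coeff]
  refine Finset.sum_congr rfl fun i _ => ?_
  rw [Polynomial.coeff_C_mul, coeff_lagrange_basis v hv i]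

private lemma coeff_eq_divided_diff {n : ℕ} (p : ℝ[X]) (hdeg : p.degree < (n:ℕ) + 1)
    (v : Fin (n+1) → ℝ) (hv : Function.Injective v) :
    p.coeff n = ∑ i, p.eval (v i) * (∏ j ∈ Finset.univ.erase i, (v i - v j))⁻¹ := by
  have hinj : Set.InjOn v (Finset.univ : Finset (Fin (n+1))) := hv.injOn
  have hcard : (Finset.univ : Finset (Fin (n+1))).card = n + 1 := by simp
  have h := Lagrange.eq_interpolate (f := p) hinj (by rw [hcard]; exact_mod_cast hdeg)
  conv_lhs => rw [h]
  rw [coeff_interpolate v hv]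

private lemma cheb_natDegree_le : ∀ n : ℕ, (T ℝ (n:ℤ)).natDegree ≤ n := by
  intro n
  induction n using Nat.strong_induction_on with
  | _ n ih =>
    match n with
    | 0 => simp [T_zero]
    | 1 => simp [T_one]
    | (m+2) =>
      have h : T ℝ ((m:ℤ)+2) = 2 * X * T ℝ ((m:ℤ)+1) - T ℝ (m:ℤ) := T_add_two ℝ (m:ℤ)
      have hcast : ((m+2 : ℕ) : ℤ) = (m:ℤ) + 2 := by push_cast; ring
      rw [hcast, h]
      refine le_trans (Polynomial.natDegree_sub_le _ _) ?_
      have h1 : (2 * X * T ℝ ((m:ℤ)+1)).natDegree ≤ m + 2 := by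
        refine le_trans (Polynomial.natDegree_mul_le) ?_
        have h2 : (2 * X : ℝ[X]).natDegree ≤ 1 := by
          refine le_trans (Polynomial.natDegree_mul_le) ?_
          simp
        have h3 : (T ℝ ((m:ℤ)+1)).natDegree ≤ m + 1 := by
          have := ih (m+1) (by omega)
          rwa [show ((m+1:ℕ):ℤ) = (m:ℤ)+1 by push_cast; ring] at this
        omega
      have h4 : (T ℝ (m:ℤ)).natDegree ≤ m + 2 := le_trans (ih m (by omega)) (by omega)
      omega

private lemma cheb_coeff : ∀ n : ℕ, (T ℝ ((n:ℤ)+1)).coeff (n+1) = 2^n := by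
  intro n
  induction n with
  | zero => simp [T_one]
  | succ m ih =>
    have h : T ℝ ((m:ℤ)+2) = 2 * X * T ℝ ((m:ℤ)+1) - T ℝ (m:ℤ) := T_add_two ℝ (m:ℤ)
    have hcast : ((m+1:ℕ):ℤ) + 1 = (m:ℤ) + 2 := by push_cast; ring
    rw [hcast, h]
    rw [Polynomial.coeff_sub]
    have hzero : (T ℝ (m:ℤ)).coeff (m+2) = 0 := by
      apply Polynomial.coeff_eq_zero_of_natDegree_lt
      exact lt_of_le_of_lt (cheb_natDegree_le m) (by omega)
    have hXmul : (2 * X * T ℝ ((m:ℤ)+1)).coeff (m+2) = 2 * (T ℝ ((m:ℤ)+1)).coeff (m+1) := by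
      have h2 : (2:ℝ[X]) = Polynomial.C 2 := (map_ofNat Polynomial.C 2).symm
      rw [mul_assoc, h2, Polynomial.coeff_C_mul, Polynomial.coeff_X_mul]
    rw [hXmul, hzero, ih]
    ring

private lemma prod_sign_strictAnti {n : ℕ} (v : Fin (n+1) → ℝ) (hv : StrictAnti v)
    (i : Fin (n+1)) :
    ∏ j ∈ Finset.univ.erase i, (v i - v j)
      = (-1)^(i:ℕ) * ∏ j ∈ Finset.univ.erase i, |v i - v j| := by
  have hsplit : Finset.univ.erase i = Finset.Iio i ∪ Finset.Ioi i := by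
    ext j
    simp only [Finset.mem_erase, Finset.mem_univ, and_true, Finset.mem_union,
      Finset.mem_Iio, Finset.mem_Ioi]
    exact ne_iff_lt_or_gt
  have hdisj : Disjoint (Finset.Iio i) (Finset.Ioi i) := by
    rw [Finset.disjoint_left]
    intro j hj hj'
    exact absurd (Finset.mem_Ioi.mp hj') (not_lt.mpr (le_of_lt (Finset.mem_Iio.mp hj)))
  rw [hsplit, Finset.prod_union hdisj, Finset.prod_union hdisj]
  have hneg : ∀ j ∈ Finset.Iio i, v i - v j = (-1) * |v i - v j| := by
    intro j hj
    have : v i < v j := hv (Finset.mem_Iio.mp hj)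
    rw [abs_of_neg (by linarith)]; ring
  have hpos : ∀ j ∈ Finset.Ioi i, v i - v j = |v i - v j| := by
    intro j hj
    have : v j < v i := hv (Finset.mem_Ioi.mp hj)
    rw [abs_of_pos (by linarith)]
  rw [Finset.prod_congr rfl hneg, Finset.prod_congr rfl hpos, Finset.prod_mul_distrib,
    Finset.prod_const]
  have hcard : (Finset.Iio i).card = (i:ℕ) := by simp
  rw [hcard]; ring

private lemma cheb_node_sum (q : ℕ) (hq : 1 ≤ q) :
    ∑ i : Fin (q+1), (∏ j ∈ Finset.univ.erase i,
        |cos ((i:ℕ) * π / q) - cos ((j:ℕ) * π / q)|)⁻¹ = 2^(q-1) := by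
  have hqR : (0:ℝ) < q := by exact_mod_cast hq
  set u : Fin (q+1) → ℝ := fun i => cos ((i:ℕ) * π / q) with hu
  have hanti : StrictAnti u := by
    intro i j hij
    refine cos_lt_cos_of_nonneg_of_le_pi (by positivity) ?_ ?_
    · rw [div_le_iff₀ hqR]
      have hj : ((j:ℕ):ℝ) ≤ (q:ℝ) := by exact_mod_cast (Fin.is_le j)
      nlinarith [pi_pos]
    · have hij' : ((i:ℕ):ℝ) < ((j:ℕ):ℝ) := by exact_mod_cast hij
      have := pi_pos
      gcongr
  have hinj : Function.Injective u := hanti.injective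
  have heval : ∀ i : Fin (q+1), (T ℝ (q:ℤ)).eval (u i) = (-1)^(i:ℕ) := by
    intro i
    rw [hu]
    simp only
    rw [T_real_cos]
    have h : ((q:ℤ):ℝ) * ((i:ℕ) * π / q) = (i:ℕ) * π := by push_cast; field_simp
    rw [h]
    simpa using Real.cos_nat_mul_pi_sub 0 (i:ℕ)
  have hdeg : (T ℝ (q:ℤ)).degree < (q:ℕ) + 1 := by
    refine lt_of_le_of_lt (Polynomial.degree_le_natDegree) ?_
    exact_mod_cast Nat.lt_succ_of_le (cheb_natDegree_le q)
  have hdd := coeff_eq_divided_diff (T ℝ (q:ℤ)) hdeg u hinj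
  have hcoeff : (T ℝ (q:ℤ)).coeff q = 2^(q-1) := by
    obtain ⟨m, rfl⟩ := Nat.exists_eq_add_of_le hq
    have := cheb_coeff m
    rw [show ((1+m : ℕ):ℤ) = (m:ℤ)+1 by push_cast; ring, show (1+m) = m+1 by ring]
    simpa using this
  rw [hcoeff] at hdd
  rw [hdd]
  refine Finset.sum_congr rfl fun i _ => ?_
  rw [heval i, prod_sign_strictAnti u hanti i, mul_inv, ← mul_assoc]
  have h1 : ((-1:ℝ))^(i:ℕ) * ((-1:ℝ)^(i:ℕ))⁻¹ = 1 := by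
    rw [mul_inv_cancel₀]
    positivity
  rw [h1, one_mul]

private lemma contDiff_polyeval (p : ℝ[X]) {n : ℕ∞} : ContDiff ℝ n fun x : ℝ => p.eval x := by
  have h : (fun x : ℝ => p.eval x)
      = fun x => ∑ i ∈ Finset.range (p.natDegree + 1), p.coeff i * x ^ i := by
    funext x; exact Polynomial.eval_eq_sum_range x
  rw [h]
  exact ContDiff.sum fun i _ => contDiff_const.mul (contDiff_id.pow i)

private lemma iter_rolle {a b : ℝ} :
    ∀ (n : ℕ) (g : ℝ → ℝ), ContDiffOn ℝ n g (Set.Icc a b) →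
    ∀ (t : Fin (n+1) → ℝ), StrictMono t → (∀ i, t i ∈ Set.Icc a b) →
    (∀ i, g (t i) = 0) →
    ∃ ξ ∈ Set.Icc a b, iteratedDerivWithin n g (Set.Icc a b) ξ = 0 := by
  intro n
  induction n with
  | zero =>
    intro g _ t _ hmem hz
    exact ⟨t 0, hmem 0, by simpa [iteratedDerivWithin_zero] using hz 0⟩
  | succ n ih =>
    intro g hg t ht hmem hz
    have hab : a < b := by
      have h01 : t 0 < t (Fin.last (n+1)) := ht (by simp [Fin.pos_iff_ne_zero, Fin.lt_def])
      have h0 := hmem 0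
      have h1 := hmem (Fin.last (n+1))
      exact lt_of_le_of_lt h0.1 (lt_of_lt_of_le h01 h1.2)
    have hUD : UniqueDiffOn ℝ (Set.Icc a b) := uniqueDiffOn_Icc hab
    -- Rolle on each consecutive pair
    have hRolle : ∀ i : Fin (n+1), ∃ c, c ∈ Set.Ioo (t i.castSucc) (t i.succ) ∧
        derivWithin g (Set.Icc a b) c = 0 := by
      intro i
      have hlt : t i.castSucc < t i.succ := ht (by simp [Fin.lt_def])
      have hcont : ContinuousOn g (Set.Icc (t i.castSucc) (t i.succ)) :=
        hg.continuousOn.mono (Set.Icc_subset_Icc (hmem i.castSucc).1 (hmem i.succ).2)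
      obtain ⟨c, hc, hc0⟩ := exists_deriv_eq_zero hlt hcont (by rw [hz, hz])
      refine ⟨c, hc, ?_⟩
      have hcmem : Set.Icc a b ∈ nhds c := by
        refine Icc_mem_nhds ?_ ?_
        · exact lt_of_le_of_lt (hmem i.castSucc).1 hc.1
        · exact lt_of_lt_of_le hc.2 (hmem i.succ).2
      rw [derivWithin_of_mem_nhds hcmem]
      exact hc0
    choose s hs hs0 using hRolle
    have hsmono : StrictMono s := by
      intro i j hij
      have h1 : s i < t i.succ := (hs i).2
      have h2 : t j.castSucc < s j := (hs j).1
      have h3 : t i.succ ≤ t j.castSucc := by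
        have hle : i.succ ≤ j.castSucc := by
          rw [Fin.le_def, Fin.val_succ, Fin.coe_castSucc]
          exact Fin.lt_def.mp hij
        rcases eq_or_lt_of_le hle with h | h
        · rw [h]
        · exact le_of_lt (ht h)
      linarith
    have hsmem : ∀ i, s i ∈ Set.Icc a b := by
      intro i
      constructor
      · exact le_of_lt (lt_of_le_of_lt (hmem i.castSucc).1 (hs i).1)
      · exact le_of_lt (lt_of_lt_of_le (hs i).2 (hmem i.succ).2)
    have hg' : ContDiffOn ℝ n (derivWithin g (Set.Icc a b)) (Set.Icc a b) := by
      apply hg.derivWithin hUD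
      exact_mod_cast le_refl ((n:ℕ∞) + 1)
    obtain ⟨ξ, hξ, hξ0⟩ := ih (derivWithin g (Set.Icc a b)) hg' s hsmono hsmem hs0
    refine ⟨ξ, hξ, ?_⟩
    rw [iteratedDerivWithin_succ']
    exact hξ0

private lemma iteratedDerivWithin_polyeval {a b : ℝ} (hab : a < b) :
    ∀ (n : ℕ) (P : ℝ[X]) (x : ℝ), x ∈ Set.Icc a b →
    iteratedDerivWithin n (fun y => P.eval y) (Set.Icc a b) x
      = (Polynomial.derivative^[n] P).eval x := by
  have hUD : UniqueDiffOn ℝ (Set.Icc a b) := uniqueDiffOn_Icc hab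
  intro n
  induction n with
  | zero => intro P x _; simp [iteratedDerivWithin_zero]
  | succ n ih =>
    intro P x hx
    rw [iteratedDerivWithin_succ']
    have hEq : Set.EqOn (derivWithin (fun y => P.eval y) (Set.Icc a b))
        (fun y => P.derivative.eval y) (Set.Icc a b) := by
      intro y hy
      exact Polynomial.derivWithin (p := P) (hUD.uniqueDiffWithinAt hy)
    have hcongr := iteratedDerivWithin_congr (n := n) hEq hx
    rw [hcongr, ih P.derivative x hx, Function.iterate_succ_apply]

private lemma russmann_key {a b : ℝ} (q : ℕ) (hq : 1 ≤ q) (f : ℝ → ℝ)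
    (hf : ContDiffOn ℝ q f (Set.Icc a b)) (β ε : ℝ)
    (hder : ∀ s ∈ Set.Icc a b, β ≤ |iteratedDerivWithin q f (Set.Icc a b) s|)
    (t : Fin (q+1) → ℝ) (ht : StrictMono t) (hmem : ∀ i, t i ∈ Set.Icc a b)
    (hval : ∀ i, |f (t i)| ≤ ε) :
    β ≤ q.factorial * ε * ∑ i, (∏ j ∈ Finset.univ.erase i, |t i - t j|)⁻¹ := by
  have hab : a < b := by
    have h01 : t 0 < t (Fin.last q) := ht (by
      rw [Fin.lt_def]; simp; omega)
    exact lt_of_le_of_lt (hmem 0).1 (lt_of_lt_of_le h01 (hmem (Fin.last q)).2)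
  have hinj : Set.InjOn t (Finset.univ : Finset (Fin (q+1))) := ht.injective.injOn
  set P : ℝ[X] := Lagrange.interpolate Finset.univ t (fun i => f (t i)) with hP
  set g : ℝ → ℝ := f - fun y => P.eval y with hg
  have hgC : ContDiffOn ℝ q g (Set.Icc a b) := hf.sub (contDiff_polyeval P).contDiffOn
  have hgz : ∀ i, g (t i) = 0 := by
    intro i
    have := Lagrange.eval_interpolate_at_node (fun i => f (t i)) hinj (Finset.mem_univ i)
    simp only [hg, Pi.sub_apply]
    rw [this]; ring
  obtain ⟨ξ, hξ, hξ0⟩ := iter_rolle q g hgC t ht hmem hgz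
  have hUD : UniqueDiffOn ℝ (Set.Icc a b) := uniqueDiffOn_Icc hab
  have hsub : iteratedDerivWithin q g (Set.Icc a b) ξ
      = iteratedDerivWithin q f (Set.Icc a b) ξ
        - iteratedDerivWithin q (fun y => P.eval y) (Set.Icc a b) ξ :=
    iteratedDerivWithin_sub hξ hUD (hf ξ hξ) ((contDiff_polyeval P).contDiffOn ξ hξ)
  have hfeq : iteratedDerivWithin q f (Set.Icc a b) ξ
      = (Polynomial.derivative^[q] P).eval ξ := by
    have := hsub.symm.trans hξ0
    have h2 := iteratedDerivWithin_polyeval hab q P ξ hξ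
    linarith [this, h2]
  -- P has natDegree ≤ q, so derivative^[q] P is the constant q! * P.coeff q
  have hPdeg : P.natDegree ≤ q := by
    refine Polynomial.natDegree_le_iff_degree_le.mpr ?_
    have := Lagrange.degree_interpolate_le (fun i => f (t i)) hinj
    simpa [hP] using this
  have hcd : (Polynomial.derivative^[q] P).natDegree ≤ 0 := by
    refine le_trans (Polynomial.natDegree_iterate_derivative P q) ?_
    omega
  have hconst : Polynomial.derivative^[q] P = Polynomial.C ((q.factorial : ℝ) * P.coeff q) := by
    rw [Polynomial.eq_C_of_natDegree_le_zero hcd]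
    congr 1
    rw [Polynomial.coeff_iterate_derivative, zero_add, Nat.descFactorial_self, nsmul_eq_mul]
  have hβ : β ≤ (q.factorial : ℝ) * |P.coeff q| := by
    have h := hder ξ hξ
    rw [hfeq, hconst, Polynomial.eval_C, abs_mul, Nat.abs_cast] at h
    exact h
  have hcoeff : P.coeff q = ∑ i, f (t i) * (∏ j ∈ Finset.univ.erase i, (t i - t j))⁻¹ :=
    coeff_interpolate t ht.injective _
  have hε0 : 0 ≤ ε := le_trans (abs_nonneg _) (hval 0)
  have habs : |P.coeff q| ≤ ε * ∑ i, (∏ j ∈ Finset.univ.erase i, |t i - t j|)⁻¹ := by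
    rw [hcoeff]
    refine le_trans (Finset.abs_sum_le_sum_abs _ _) ?_
    rw [Finset.mul_sum]
    refine Finset.sum_le_sum fun i _ => ?_
    rw [abs_mul, abs_inv, Finset.abs_prod]
    have hw : (0:ℝ) ≤ (∏ j ∈ Finset.univ.erase i, |t i - t j|)⁻¹ := by positivity
    exact mul_le_mul_of_nonneg_right (hval i) hw
  calc β ≤ (q.factorial : ℝ) * |P.coeff q| := hβ
    _ ≤ (q.factorial : ℝ) * (ε * ∑ i, (∏ j ∈ Finset.univ.erase i, |t i - t j|)⁻¹) := by
        exact mul_le_mul_of_nonneg_left habs (by positivity)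
    _ = q.factorial * ε * ∑ i, (∏ j ∈ Finset.univ.erase i, |t i - t j|)⁻¹ := by ring

private lemma exists_inverse_cdf {a b : ℝ} {E : Set ℝ} (hE : IsClosed E)
    (hEsub : E ⊆ Set.Icc a b) :
    ∃ τ : ℝ → ℝ, (∀ x, 0 < x → x < (volume E).toReal → τ x ∈ E) ∧
      ∀ x y, 0 < x → x ≤ y → y < (volume E).toReal → y - x ≤ τ y - τ x := by
  set r := (volume E).toReal with hr
  have hfin : volume E ≠ ⊤ := by
    refine ne_top_of_le_ne_top ?_ (measure_mono hEsub)
    rw [Real.volume_Icc]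
    exact ENNReal.ofReal_ne_top
  set F : ℝ → ℝ := fun t => (volume (E ∩ Set.Iic t)).toReal with hF
  have hfinI : ∀ t, volume (E ∩ Set.Iic t) ≠ ⊤ := fun t =>
    ne_top_of_le_ne_top hfin (measure_mono Set.inter_subset_left)
  have hFmono : Monotone F := by
    intro s t hst
    exact ENNReal.toReal_mono (hfinI t)
      (measure_mono (Set.inter_subset_inter_right _ (Set.Iic_subset_Iic.mpr hst)))
  have hFlip : ∀ s t : ℝ, s ≤ t → F t ≤ F s + (t - s) := by
    intro s t hst
    have hsub : E ∩ Set.Iic t ⊆ (E ∩ Set.Iic s) ∪ Set.Ioc s t := by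
      rintro y ⟨hy, hy2⟩
      rcases le_or_gt y s with h | h
      · exact Or.inl ⟨hy, h⟩
      · exact Or.inr ⟨h, hy2⟩
    have h1 : volume (E ∩ Set.Iic t) ≤ volume (E ∩ Set.Iic s) + volume (Set.Ioc s t) :=
      le_trans (measure_mono hsub) (measure_union_le _ _)
    have h2 : volume (Set.Ioc s t) = ENNReal.ofReal (t - s) := Real.volume_Ioc
    have h3 := ENNReal.toReal_mono (by
      rw [h2]; exact ENNReal.add_ne_top.mpr ⟨hfinI s, ENNReal.ofReal_ne_top⟩) h1
    rwa [ENNReal.toReal_add (hfinI s) (by rw [h2]; exact ENNReal.ofReal_ne_top), h2,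
      ENNReal.toReal_ofReal (by linarith)] at h3
  have hFa : F a = 0 := by
    have : E ∩ Set.Iic a ⊆ {a} := by
      rintro y ⟨hy, hy2⟩
      exact Set.mem_singleton_iff.mpr (le_antisymm hy2 (hEsub hy).1)
    simp only [hF]
    rw [measure_mono_null this Real.volume_singleton]
    simp
  have hFb : F b = r := by
    have : E ∩ Set.Iic b = E :=
      Set.inter_eq_self_of_subset_left (fun y hy => (hEsub hy).2)
    rw [hF]; simp only; rw [this]
  have hFcont : Continuous F := by
    refine LipschitzWith.continuous (K := 1) ?_
    refine LipschitzWith.of_dist_le_mul fun s t => ?_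
    rw [Real.dist_eq, Real.dist_eq]
    push_cast
    rw [one_mul]
    rcases le_total s t with h | h
    · have h1 := hFmono h
      have h2 := hFlip s t h
      rw [abs_of_nonpos (by linarith), abs_of_nonpos (by linarith)]
      linarith
    · have h1 := hFmono h
      have h2 := hFlip t s h
      rw [abs_of_nonneg (by linarith), abs_of_nonneg (by linarith)]
      linarith
  set τ : ℝ → ℝ := fun x => sInf {t | x ≤ F t} with hτ
  have hbase : ∀ x, 0 < x → x < r → (τ x ∈ E ∧ F (τ x) = x) := by
    intro x hx0 hxr
    set S := {t | x ≤ F t} with hS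
    have hSne : S.Nonempty := ⟨b, by rw [hS, Set.mem_setOf_eq, hFb]; linarith⟩
    have hSbdd : BddBelow S := by
      refine ⟨a, fun t ht => ?_⟩
      by_contra hat
      push_neg at hat
      have := hFmono (le_of_lt hat)
      rw [hFa] at this
      rw [hS, Set.mem_setOf_eq] at ht
      linarith
    have hSclosed : IsClosed S := isClosed_le continuous_const hFcont
    have hmem : τ x ∈ S := hSclosed.csInf_mem hSne hSbdd
    have hxle : x ≤ F (τ x) := hmem
    have hFτ : F (τ x) = x := by
      by_contra hne
      have hlt : x < F (τ x) := lt_of_le_of_ne hxle (Ne.symm hne)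
      set d := F (τ x) - x with hd
      have hd0 : 0 < d := by linarith
      have h1 : F (τ x) ≤ F (τ x - d) + d := by
        have := hFlip (τ x - d) (τ x) (by linarith)
        linarith
      have h2 : τ x - d ∈ S := by
        rw [hS, Set.mem_setOf_eq]; linarith
      have hcontra : τ x ≤ τ x - d := csInf_le hSbdd h2
      linarith
    refine ⟨?_, hFτ⟩
    by_contra hnotE
    obtain ⟨δ, hδ0, hball⟩ := Metric.isOpen_iff.mp hE.isOpen_compl (τ x) hnotE
    have hzero : E ∩ Set.Ioc (τ x - δ/2) (τ x) = ∅ := by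
      ext y
      simp only [Set.mem_inter_iff, Set.mem_Ioc, Set.mem_empty_iff_false, iff_false]
      rintro ⟨hyE, hy1, hy2⟩
      have : y ∈ Metric.ball (τ x) δ := by
        rw [Metric.mem_ball, Real.dist_eq, abs_of_nonpos (by linarith)]
        linarith
      exact hball this hyE
    have hFeq : F (τ x) ≤ F (τ x - δ/2) := by
      have hsub : E ∩ Set.Iic (τ x) ⊆ (E ∩ Set.Iic (τ x - δ/2)) ∪ (E ∩ Set.Ioc (τ x - δ/2) (τ x)) := by
        rintro y ⟨hy, hy2⟩
        rcases le_or_gt y (τ x - δ/2) with h | h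
        · exact Or.inl ⟨hy, h⟩
        · exact Or.inr ⟨hy, h, hy2⟩
      have h1 : volume (E ∩ Set.Iic (τ x)) ≤ volume (E ∩ Set.Iic (τ x - δ/2)) := by
        refine le_trans (measure_mono hsub) ?_
        refine le_trans (measure_union_le _ _) ?_
        rw [hzero, measure_empty, add_zero]
      exact ENNReal.toReal_mono (hfinI _) h1
    have h2 : τ x - δ/2 ∈ S := by
      rw [hS, Set.mem_setOf_eq]
      calc x ≤ F (τ x) := hxle
        _ ≤ F (τ x - δ/2) := hFeq
    have hcontra : τ x ≤ τ x - δ/2 := csInf_le hSbdd h2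
    linarith
  refine ⟨τ, fun x hx0 hxr => (hbase x hx0 hxr).1, ?_⟩
  intro x y hx0 hxy hyr
  have hx := hbase x hx0 (lt_of_le_of_lt hxy hyr)
  have hy := hbase y (lt_of_lt_of_le hx0 hxy) hyr
  have hττ : τ x ≤ τ y := by
    apply csInf_le_csInf
    · refine ⟨a, fun t ht => ?_⟩
      by_contra hat
      push_neg at hat
      have := hFmono (le_of_lt hat)
      rw [hFa] at this
      rw [Set.mem_setOf_eq] at ht
      linarith
    · exact ⟨b, by rw [Set.mem_setOf_eq, hFb]; linarith⟩
    · intro t ht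
      rw [Set.mem_setOf_eq] at ht ⊢
      linarith
  have := hFlip (τ x) (τ y) hττ
  rw [hx.2, hy.2] at this
  linarith

set_option maxHeartbeats 2000000 in
theorem russmann_measure_estimate (q : ℕ) (hq : 1 ≤ q) (β ε : ℝ) (hβ : 0 < β) (hε : 0 < ε)
    (a b : ℝ) (hab : a ≤ b) (f : ℝ → ℝ)
    (hf : ContDiffOn ℝ q f (Set.Icc a b))
    (hder : ∀ t ∈ Set.Icc a b, β ≤ |iteratedDerivWithin q f (Set.Icc a b) t|) :
    volume {t : ℝ | t ∈ Set.Icc a b ∧ |f t| ≤ ε} ≤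
      ENNReal.ofReal (4 * ((q.factorial * ε) / (2 * β)) ^ ((1 : ℝ) / q)) := by
  have hq0 : (0:ℝ) < q := by exact_mod_cast hq
  set E := {t : ℝ | t ∈ Set.Icc a b ∧ |f t| ≤ ε} with hE
  have hEsub : E ⊆ Set.Icc a b := fun t ht => ht.1
  have hEclosed : IsClosed E := by
    have hEeq : E = Set.Icc a b ∩ (fun t => |f t|) ⁻¹' Set.Iic ε := by
      ext t
      simp [hE, Set.mem_setOf_eq, Set.mem_inter_iff]
    rw [hEeq]
    exact ContinuousOn.preimage_isClosed_of_isClosed hf.continuousOn.abs isClosed_Icc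
      isClosed_Iic
  have hfin : volume E ≠ ⊤ :=
    ne_top_of_le_ne_top (by rw [Real.volume_Icc]; exact ENNReal.ofReal_ne_top)
      (measure_mono hEsub)
  set A := ((q.factorial : ℝ) * ε) / (2*β) with hA
  have hApos : 0 < A := by positivity
  set δ4 := 4 * A ^ ((1:ℝ)/(q:ℝ)) with hδ4
  have hδ4pos : 0 < δ4 := by positivity
  rw [← ENNReal.ofReal_toReal hfin]
  refine ENNReal.ofReal_le_ofReal ?_
  set r := (volume E).toReal with hr
  by_contra hcon
  push_neg at hcon
  set L := (δ4 + r)/2 with hL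
  have hLδ : δ4 < L := by rw [hL]; linarith
  have hLr : L < r := by rw [hL]; linarith
  have hLpos : 0 < L := lt_trans hδ4pos hLδ
  obtain ⟨τ, hτE, hτgap⟩ := exists_inverse_cdf hEclosed hEsub
  set u : Fin (q+1) → ℝ := fun i => cos ((i:ℕ) * π / q) with hu
  have hanti : StrictAnti u := by
    intro i j hij
    refine cos_lt_cos_of_nonneg_of_le_pi (by positivity) ?_ ?_
    · rw [div_le_iff₀ hq0]
      have hj : ((j:ℕ):ℝ) ≤ (q:ℝ) := by exact_mod_cast (Fin.is_le j)
      nlinarith [pi_pos]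
    · have hij' : ((i:ℕ):ℝ) < ((j:ℕ):ℝ) := by exact_mod_cast hij
      have := pi_pos
      gcongr
  have hucos : ∀ i : Fin (q+1), -1 ≤ u i ∧ u i ≤ 1 := fun i =>
    ⟨neg_one_le_cos _, cos_le_one _⟩
  set x : Fin (q+1) → ℝ := fun i => (r - L)/2 + (L/2) * (1 - u i) with hx
  have hxdiff : ∀ i j : Fin (q+1), x j - x i = (L/2) * (u i - u j) := by
    intro i j; rw [hx]; ring
  have hxmono : StrictMono x := by
    intro i j hij
    have h1 : u j < u i := hanti hij
    have h2 := hxdiff i j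
    have h3 : 0 < L/2 * (u i - u j) :=
      mul_pos (by linarith) (by linarith)
    have h4 : 0 < x j - x i := by rw [h2]; exact h3
    exact sub_pos.mp h4
  have hx0 : ∀ i, 0 < x i := by
    intro i
    have := (hucos i).2
    rw [hx]
    have h1 : 0 ≤ (L/2) * (1 - u i) := by nlinarith
    simp only
    nlinarith
  have hxr : ∀ i, x i < r := by
    intro i
    have := (hucos i).1
    rw [hx]
    simp only
    nlinarith
  set t : Fin (q+1) → ℝ := fun i => τ (x i) with ht
  have htE : ∀ i, t i ∈ E := fun i => hτE _ (hx0 i) (hxr i)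
  have hgap : ∀ i j : Fin (q+1), i < j → x j - x i ≤ t j - t i := fun i j h =>
    hτgap _ _ (hx0 i) (le_of_lt (hxmono h)) (hxr j)
  have htmono : StrictMono t := by
    intro i j h
    have h1 := hgap i j h
    have h2 := hxmono h
    simp only [ht]
    linarith [hgap i j h, hxmono h]
  have habs : ∀ i j : Fin (q+1), j ≠ i → (L/2) * |u i - u j| ≤ |t i - t j| := by
    intro i j hne
    rcases lt_or_gt_of_ne (Ne.symm hne) with h | h
    · -- i < j
      have h1 := hgap i j h
      have h2 := hxdiff i j
      have h3 : u j < u i := hanti h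
      have h4 : t i < t j := htmono h
      have h5 : L/2 * (u i - u j) ≤ t j - t i := by rw [← h2]; exact h1
      rw [abs_of_pos (by linarith), abs_of_neg (by linarith : t i - t j < 0)]
      linarith
    · have h1 := hgap j i h
      have h2 := hxdiff j i
      have h3 : u i < u j := hanti h
      have h4 : t j < t i := htmono h
      have h5 : L/2 * (u j - u i) ≤ t i - t j := by rw [← h2]; exact h1
      rw [abs_of_neg (by linarith : u i - u j < 0), abs_of_pos (by linarith : 0 < t i - t j)]
      have h6 : L/2 * |u i - u j| = L/2 * (u j - u i) := by
        rw [abs_of_neg (by linarith : u i - u j < 0)]; ring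
      linarith [h5, h6]
  have hcheb : ∑ i : Fin (q+1), (∏ j ∈ Finset.univ.erase i, |u i - u j|)⁻¹ = 2^(q-1) :=
    cheb_node_sum q hq
  clear_value u x t L r δ4 A
  clear hu hx ht hL
  have hkey := russmann_key q hq f hf β ε hder t htmono (fun i => hEsub (htE i))
    (fun i => (htE i).2)
  -- bound the sum by the Chebyshev sum
  have hL2pos : (0:ℝ) < (L/2)^q := by positivity
  have hupos : ∀ i : Fin (q+1), 0 < ∏ j ∈ Finset.univ.erase i, |u i - u j| := by
    intro i
    refine Finset.prod_pos fun j hj => ?_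
    have hji : j ≠ i := (Finset.mem_erase.mp hj).1
    have : u i ≠ u j := fun h => hji (hanti.injective h).symm
    exact abs_pos.mpr (sub_ne_zero.mpr this)
  have hsum : ∑ i : Fin (q+1), (∏ j ∈ Finset.univ.erase i, |t i - t j|)⁻¹
      ≤ ((L/2)^q)⁻¹ * 2^(q-1) := by
    have hstep : ∀ i : Fin (q+1),
        (∏ j ∈ Finset.univ.erase i, |t i - t j|)⁻¹
          ≤ ((L/2)^q)⁻¹ * (∏ j ∈ Finset.univ.erase i, |u i - u j|)⁻¹ := by
      intro i
      have hcard : (Finset.univ.erase i).card = q := by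
        rw [Finset.card_erase_of_mem (Finset.mem_univ i)]
        simp
      have hprod : (L/2)^q * ∏ j ∈ Finset.univ.erase i, |u i - u j|
          ≤ ∏ j ∈ Finset.univ.erase i, |t i - t j| := by
        have heq : (L/2)^q * ∏ j ∈ Finset.univ.erase i, |u i - u j|
            = ∏ j ∈ Finset.univ.erase i, ((L/2) * |u i - u j|) := by
          rw [Finset.prod_mul_distrib, Finset.prod_const, hcard]
        rw [heq]
        refine Finset.prod_le_prod (fun j _ => by positivity) ?_
        intro j hj
        exact habs i j (Finset.mem_erase.mp hj).1
      rw [← mul_inv]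
      refine inv_anti₀ ?_ hprod
      exact mul_pos hL2pos (hupos i)
    refine le_trans (Finset.sum_le_sum fun i _ => hstep i) ?_
    rw [← Finset.mul_sum, hcheb]
  have hβbound : β ≤ (q.factorial : ℝ) * ε * (((L/2)^q)⁻¹ * 2^(q-1)) :=
    le_trans hkey (mul_le_mul_of_nonneg_left hsum (by positivity))
  -- numeric manipulation
  have h2q : (0:ℝ) < 2^q := by positivity
  have h1 : β * L^q / 2^q ≤ (q.factorial : ℝ) * ε * 2^(q-1) := by
    have hmul := mul_le_mul_of_nonneg_right hβbound hL2pos.le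
    have heq2 : (q.factorial : ℝ) * ε * (((L/2)^q)⁻¹ * 2^(q-1)) * (L/2)^q
        = (q.factorial : ℝ) * ε * 2^(q-1) := by
      field_simp
    rw [heq2] at hmul
    rw [div_pow] at hmul
    calc β * L^q / 2^q = β * (L^q / 2^q) := by ring
      _ ≤ _ := hmul
  have hpow4 : (2:ℝ) * (2^(q-1) * 2^q) = 4^q := by
    have ha : (2:ℝ)^(q-1) * 2^q * 2 = 2^(q-1+q+1) := by
      rw [pow_add, pow_add, pow_one]
    have hb : q-1+q+1 = 2*q := by omega
    have hc : (4:ℝ)^q = 2^(2*q) := by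
      rw [two_mul, pow_add, show (4:ℝ)=2*2 by norm_num, mul_pow]
    rw [hc, ← hb, ← ha]; ring
  have hLq : L^q * (2*β) ≤ 4^q * ((q.factorial:ℝ) * ε) := by
    have h2 : β * L^q ≤ (q.factorial : ℝ) * ε * 2^(q-1) * 2^q := by
      rw [div_le_iff₀ h2q] at h1
      linarith
    have heq : (4:ℝ)^q * ((q.factorial:ℝ)*ε) = 2*((q.factorial:ℝ)*ε*2^(q-1)*2^q) := by
      rw [← hpow4]; ring
    nlinarith [h2, heq]
  have hfinal : L ≤ δ4 := by
    have hAL : L^q ≤ 4^q * A := by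
      rw [hA, mul_div_assoc']
      rw [le_div_iff₀ (by linarith : (0:ℝ) < 2*β)]
      linarith [hLq]
    have h1q : L = (L^q) ^ ((1:ℝ)/(q:ℝ)) := by
      rw [← Real.rpow_natCast L q, ← Real.rpow_mul hLpos.le]
      rw [mul_one_div, div_self (ne_of_gt hq0), Real.rpow_one]
    rw [h1q, hδ4]
    have hstep : ((L^q):ℝ) ^ ((1:ℝ)/(q:ℝ)) ≤ (4^q * A) ^ ((1:ℝ)/(q:ℝ)) :=
      Real.rpow_le_rpow (by positivity) hAL (by positivity)
    refine le_trans hstep ?_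
    rw [Real.mul_rpow (by positivity) hApos.le]
    have h4 : ((4:ℝ)^q) ^ ((1:ℝ)/(q:ℝ)) = 4 := by
      rw [← Real.rpow_natCast 4 q, ← Real.rpow_mul (by norm_num), mul_one_div,
        div_self (ne_of_gt hq0), Real.rpow_one]
    rw [h4]
  linarith
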